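/- Let Ω ⊂ ℝ^d be a bounded Lipschitz domain and let (u, p) be a smooth solution of the system: for all φ ∈ H¹(Ω), ((div u)_t, φ) + κ(∇p, ∇φ) = 0, and for all v ∈ H¹(Ω)^d, α(div u, div v) + β(∇u, ∇v) − (p, div v) = ⟨f, v⟩ with f independent of t. Define E(t) := ½[β‖∇u(t)‖²_{L²} + α‖div u(t)‖²_{L²} − 2⟨f, u(t)⟩]. Then for all t ∈ (0,T], E(t) + κ ∫₀ᵗ ‖∇p(s)‖²_{L²} ds = E(0). -/

import Mathlib

open scoped RealInnerProductSpace

/-- dissipative energy law for the gel system.  If for all `t`,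
`((div u)_t, φ) + κ(∇p, ∇φ) = 0` for every `φ ∈ H¹(Ω)` and
`α(div u, div v) + β(∇u, ∇v) − (p, div v) = ⟨f, v⟩` for every `v ∈ H¹(Ω)^d`
(with `f` independent of `t`), then for
`E(t) := ½[β‖∇u(t)‖² + α‖div u(t)‖² − 2⟨f, u(t)⟩]` one has
`E(t) + κ ∫₀ᵗ ‖∇p(s)‖² ds = E(0)` for all `t ∈ (0,T]`.  Here `L2 = L²(Ω)`,
`H1 = H¹(Ω)`, `V = H¹(Ω)^d`, `GS`/`GV` the targets of the scalar/vector gradients,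
and `ι : H¹ ↪ L²` the inclusion. -/
theorem gel_energy_law
    {L2 H1 V GS GV : Type*}
    [NormedAddCommGroup L2] [InnerProductSpace ℝ L2]
    [NormedAddCommGroup H1] [InnerProductSpace ℝ H1]
    [NormedAddCommGroup V] [InnerProductSpace ℝ V]
    [NormedAddCommGroup GS] [InnerProductSpace ℝ GS]
    [NormedAddCommGroup GV] [InnerProductSpace ℝ GV]
    (T α β κ : ℝ) (hT : 0 < T) (hα : 0 < α) (hβ : 0 < β) (hκ : 0 < κ)
    (dvg : V →L[ℝ] L2) (gradV : V →L[ℝ] GV)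
    (ι : H1 →L[ℝ] L2) (gradS : H1 →L[ℝ] GS)
    (f : V →L[ℝ] ℝ)
    (u u' : ℝ → V) (p : ℝ → H1)
    (hu : ∀ t ∈ Set.Icc (0:ℝ) T, HasDerivAt u (u' t) t)
    (hpcont : ContinuousOn p (Set.Icc (0:ℝ) T))
    (heq1 : ∀ t ∈ Set.Icc (0:ℝ) T, ∀ φ : H1,
      ⟪dvg (u' t), ι φ⟫ + κ * ⟪gradS (p t), gradS φ⟫ = 0)
    (heq2 : ∀ t ∈ Set.Icc (0:ℝ) T, ∀ v : V,
      α * ⟪dvg (u t), dvg v⟫ + β * ⟪gradV (u t), gradV v⟫ - ⟪ι (p t), dvg v⟫ = f v)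
    (E : ℝ → ℝ)
    (hE : ∀ t : ℝ, E t
      = (1/2) * (β * ‖gradV (u t)‖^2 + α * ‖dvg (u t)‖^2 - 2 * f (u t))) :
    ∀ t ∈ Set.Ioc (0:ℝ) T,
      E t + κ * ∫ s in (0:ℝ)..t, ‖gradS (p s)‖^2 = E 0 := by
  intro t ht
  have hsub : Set.uIcc (0:ℝ) t ⊆ Set.Icc (0:ℝ) T := by
    rw [Set.uIcc_of_le ht.1.le]
    exact Set.Icc_subset_Icc le_rfl ht.2
  -- derivative of E
  have hderiv : ∀ s ∈ Set.uIcc (0:ℝ) t,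
      HasDerivAt E (-(κ * ‖gradS (p s)‖^2)) s := by
    intro s hs
    have hsT := hsub hs
    have hus := hu s hsT
    have hgu : HasDerivAt (fun r => gradV (u r)) (gradV (u' s)) s :=
      (gradV.hasFDerivAt.comp_hasDerivAt s hus)
    have hdu : HasDerivAt (fun r => dvg (u r)) (dvg (u' s)) s :=
      (dvg.hasFDerivAt.comp_hasDerivAt s hus)
    have hfu : HasDerivAt (fun r => f (u r)) (f (u' s)) s :=
      (f.hasFDerivAt.comp_hasDerivAt s hus)
    have h1 : HasDerivAt (fun r => ⟪gradV (u r), gradV (u r)⟫)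
        (⟪gradV (u s), gradV (u' s)⟫ + ⟪gradV (u' s), gradV (u s)⟫) s :=
      hgu.inner ℝ hgu
    have h2 : HasDerivAt (fun r => ⟪dvg (u r), dvg (u r)⟫)
        (⟪dvg (u s), dvg (u' s)⟫ + ⟪dvg (u' s), dvg (u s)⟫) s :=
      hdu.inner ℝ hdu
    have hEfun : E = fun r => (1/2) * (β * ⟪gradV (u r), gradV (u r)⟫
        + α * ⟪dvg (u r), dvg (u r)⟫ - 2 * f (u r)) := by
      funext r
      rw [hE r, real_inner_self_eq_norm_sq, real_inner_self_eq_norm_sq]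
    rw [hEfun]
    have hD := (((h1.const_mul β).add (h2.const_mul α)).sub
      (hfu.const_mul 2)).const_mul (1/2)
    convert hD using 1
    case e'_4 => rfl
    case e'_5 => rfl
    case e'_8 => rfl
    have e2 := heq2 s hsT (u' s)
    have e1 := heq1 s hsT (p s)
    have hsym : ⟪ι (p s), dvg (u' s)⟫ = ⟪dvg (u' s), ι (p s)⟫ := real_inner_comm _ _
    have hcomm1 : ⟪gradV (u' s), gradV (u s)⟫ = ⟪gradV (u s), gradV (u' s)⟫ :=
      real_inner_comm _ _
    have hcomm2 : ⟪dvg (u' s), dvg (u s)⟫ = ⟪dvg (u s), dvg (u' s)⟫ :=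
      real_inner_comm _ _
    have hnorm : ⟪gradS (p s), gradS (p s)⟫ = ‖gradS (p s)‖^2 :=
      real_inner_self_eq_norm_sq _
    rw [hcomm1, hcomm2]
    nlinarith [e2, e1, hnorm, hsym]
  have hint : IntervalIntegrable (fun s => -(κ * ‖gradS (p s)‖^2))
      MeasureTheory.volume 0 t := by
    apply ContinuousOn.intervalIntegrable
    have : ContinuousOn (fun s => p s) (Set.uIcc (0:ℝ) t) := hpcont.mono hsub
    exact ((((gradS.continuous.comp_continuousOn this).norm).pow 2).const_smul κ).neg
  have key := intervalIntegral.integral_eq_sub_of_hasDerivAt hderiv hint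
  have hintnorm : IntervalIntegrable (fun s => ‖gradS (p s)‖^2)
      MeasureTheory.volume 0 t := by
    apply ContinuousOn.intervalIntegrable
    exact ((gradS.continuous.comp_continuousOn (hpcont.mono hsub)).norm).pow 2
  rw [intervalIntegral.integral_neg, intervalIntegral.integral_const_mul] at key
  linarith [key]
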